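/- Let G be a finite simple graph, let P = v_0, v_1, …, v_k be a longest path of G (of length k ≥ 1), suppose v_0 and v_k are nonadjacent, and suppose G contains no cycle of length k+1. Then min(d(v_0), d(v_k)) ≤ k/2. -/

import Mathlib

open SimpleGraph Finset

namespace SimpleGraph.Walk

variable {V : Type*} {G : SimpleGraph V}

lemma support_eq_map_getVert' {u v : V} (p : G.Walk u v) :
    p.support = (List.range (p.length + 1)).map p.getVert := by
  induction p with
  | nil => simp [getVert]
  | cons h q ih =>
    rw [support_cons, length_cons, List.range_succ_eq_map, List.map_cons, List.map_map, ih]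
    rfl

lemma getVert_inj' {u v : V} {p : G.Walk u v} (hp : p.IsPath) {i j : ℕ}
    (hi : i ≤ p.length) (hj : j ≤ p.length) (h : p.getVert i = p.getVert j) : i = j := by
  have hnd := hp.support_nodup
  rw [support_eq_map_getVert'] at hnd
  exact List.inj_on_of_nodup_map hnd (List.mem_range.2 (by omega)) (List.mem_range.2 (by omega)) h

lemma length_drop' {u v : V} (p : G.Walk u v) (n : ℕ) : (p.drop n).length = p.length - n := by
  induction p generalizing n with
  | nil => simp [drop]
  | cons h q ih =>
    cases n with
    | zero => simp [drop]
    | succ n => simp [drop, ih]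

lemma getVert_drop' {u v : V} (p : G.Walk u v) (n m : ℕ) :
    (p.drop n).getVert m = p.getVert (n + m) := by
  induction p generalizing n with
  | nil => simp [drop, getVert_of_length_le]
  | cons h q ih =>
    cases n with
    | zero => simp [drop]
    | succ n =>
      show (q.drop n).getVert m = (Walk.cons h q).getVert (n + 1 + m)
      rw [ih]
      have h2 : n + 1 + m = (n + m) + 1 := by omega
      rw [h2, getVert_cons_succ]

lemma isPath_drop' {u v : V} {p : G.Walk u v} (hp : p.IsPath) (n : ℕ) : (p.drop n).IsPath := by
  induction p generalizing n with
  | nil => simpa [drop] using hp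
  | cons h q ih =>
    cases n with
    | zero => simpa [drop] using hp
    | succ n =>
      simp only [drop, isPath_copy]
      exact ih ((cons_isPath_iff _ _).mp hp).1 n

lemma eq_getVert_one_of_mem_edges' {a b x : V} {p : G.Walk a b} (hp : p.IsPath)
    (h : s(a, x) ∈ p.edges) : x = p.getVert 1 := by
  cases p with
  | nil => simp at h
  | cons hadj q =>
    rw [edges_cons, List.mem_cons] at h
    rcases h with h | h
    · rw [Sym2.eq_iff] at h
      rcases h with ⟨-, rfl⟩ | ⟨h1, rfl⟩
      · rw [getVert_cons_succ, getVert_zero]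
      · exact absurd h1 hadj.ne
    · exact absurd (fst_mem_support_of_mem_edges q h)
        ((cons_isPath_iff _ _).mp hp).2

end SimpleGraph.Walk

open SimpleGraph.Walk in
lemma crossing_aux {V : Type*} [DecidableEq V] {G : SimpleGraph V} {k : ℕ} {u v : V}
    {w : G.Walk u v} (hw : w.IsPath) (hlen : w.length = k)
    (hcyc : ¬ ∃ (a : V) (c : G.Walk a a), c.IsCycle ∧ c.length = k + 1)
    {j : ℕ} (hj : j + 1 < k) (ha : G.Adj u (w.getVert (j + 1)))
    (hb : G.Adj v (w.getVert j)) : False := by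
  have hrl : w.reverse.length = k := by simp [hlen]
  have h1 : w.reverse.getVert (k - j) = w.getVert j := by
    rw [getVert_reverse, hlen]
    congr 1
    omega
  let q1 : G.Walk (w.getVert j) u := (w.reverse.drop (k - j)).copy h1 rfl
  let q2 : G.Walk (w.getVert (j + 1)) v := w.drop (j + 1)
  let q : G.Walk (w.getVert j) v := q1.append (Walk.cons ha q2)
  have hq1len : q1.length = j := by
    simp only [q1, length_copy, length_drop', hrl]
    omega
  have hq2len : q2.length = k - (j + 1) := by
    simp [q2, length_drop', hlen]
  have hqlen : q.length = k := by
    simp only [q, length_append, length_cons, hq1len, hq2len]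
    omega
  have hq1get : ∀ n, q1.getVert n = w.getVert (j - n) := by
    intro n
    show ((w.reverse.drop (k - j)).copy h1 rfl).getVert n = _
    rw [getVert_copy, getVert_drop', getVert_reverse, hlen]
    congr 1
    omega
  have hq2get : ∀ n, q2.getVert n = w.getVert (j + 1 + n) := fun n => getVert_drop' _ _ _
  have hsup1 : ∀ x ∈ q1.support, ∃ t, t ≤ j ∧ w.getVert t = x := by
    intro x hx
    rw [mem_support_iff_exists_getVert] at hx
    obtain ⟨n, hn, hnle⟩ := hx
    exact ⟨j - n, by omega, by rw [← hq1get n]; exact hn⟩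
  have hsup2 : ∀ x ∈ q2.support, ∃ t, j + 1 ≤ t ∧ t ≤ k ∧ w.getVert t = x := by
    intro x hx
    rw [mem_support_iff_exists_getVert] at hx
    obtain ⟨n, hn, hnle⟩ := hx
    rw [hq2len] at hnle
    exact ⟨j + 1 + n, by omega, by omega, by rw [← hq2get n]; exact hn⟩
  have hq1path : q1.IsPath := by
    simp only [q1, isPath_copy]
    exact isPath_drop' hw.reverse _
  have hq2path : q2.IsPath := isPath_drop' hw _
  have hqpath : q.IsPath := by
    rw [isPath_def]
    show (q1.append (Walk.cons ha q2)).support.Nodup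
    rw [support_append, support_cons, List.tail_cons]
    refine List.Nodup.append hq1path.support_nodup hq2path.support_nodup ?_
    intro x hx1 hx2
    obtain ⟨t1, ht1, hxt1⟩ := hsup1 x hx1
    obtain ⟨t2, ht2, ht2', hxt2⟩ := hsup2 x hx2
    have : t1 = t2 := getVert_inj' hw (by omega) (by omega) (by rw [hxt1, hxt2])
    omega
  have hne : s(v, w.getVert j) ∉ q.edges := by
    intro he
    have he' : s(v, w.getVert j) ∈ q.reverse.edges := by
      rw [edges_reverse]; simpa using he
    have h2 := eq_getVert_one_of_mem_edges' hqpath.reverse he'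
    rw [getVert_reverse, hqlen] at h2
    have hq : q.getVert (k - 1) = w.getVert (k - 1) := by
      show (q1.append (Walk.cons ha q2)).getVert (k - 1) = _
      rw [getVert_append, hq1len, if_neg (by omega),
        getVert_cons _ _ (by omega), hq2get]
      congr 1
      omega
    rw [hq] at h2
    have : j = k - 1 := getVert_inj' hw (by omega) (by omega) h2
    omega
  have hc : (Walk.cons hb q).IsCycle := (Walk.cons_isCycle_iff q hb).2 ⟨hqpath, hne⟩
  exact hcyc ⟨v, Walk.cons hb q, hc, by simp [hqlen]⟩

theorem stmt_12 {V : Type*} [Fintype V] [DecidableEq V] (G : SimpleGraph V)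
    [DecidableRel G.Adj] (k : ℕ) (hk : 1 ≤ k) (u v : V) (w : G.Walk u v)
    (hw : w.IsPath) (hlen : w.length = k)
    (hmax : ∀ (a b : V) (q : G.Walk a b), q.IsPath → q.length ≤ k)
    (hadj : ¬ G.Adj u v)
    (hcyc : ¬ ∃ (a : V) (c : G.Walk a a), c.IsCycle ∧ c.length = k + 1) :
    (min (G.degree u) (G.degree v) : ℚ) ≤ (k : ℚ) / 2 := by
  classical
  have hnbru : ∀ x, G.Adj u x → ∃ n, n ≤ k ∧ w.getVert n = x := by
    intro x hx
    have hxs : x ∈ w.support := by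
      by_contra hxs
      have hp : (Walk.cons hx.symm w).IsPath := hw.cons hxs
      have := hmax _ _ _ hp
      simp [hlen] at this
    rw [Walk.mem_support_iff_exists_getVert] at hxs
    obtain ⟨n, h1, h2⟩ := hxs
    exact ⟨n, by omega, h1⟩
  have hnbrv : ∀ x, G.Adj v x → ∃ n, n ≤ k ∧ w.getVert n = x := by
    intro x hx
    have hxs : x ∈ w.support := by
      by_contra hxs
      have hxs' : x ∉ w.reverse.support := by simpa using hxs
      have hp : (Walk.cons hx.symm w.reverse).IsPath := hw.reverse.cons hxs'
      have := hmax _ _ _ hp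
      simp [hlen] at this
    rw [Walk.mem_support_iff_exists_getVert] at hxs
    obtain ⟨n, h1, h2⟩ := hxs
    exact ⟨n, by omega, h1⟩
  set A := (range (k + 1)).filter (fun i => G.Adj u (w.getVert i)) with hA
  set B := (range (k + 1)).filter (fun i => G.Adj v (w.getVert i)) with hB
  have hAcard : A.card = G.degree u := by
    rw [← card_neighborFinset_eq_degree]
    apply Finset.card_bij (fun a _ => w.getVert a)
    · intro a ha
      rw [mem_neighborFinset]
      exact (mem_filter.mp ha).2
    · intro a ha b hb hab
      have ha' := mem_range.mp (mem_filter.mp ha).1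
      have hb' := mem_range.mp (mem_filter.mp hb).1
      exact Walk.getVert_inj' hw (by omega) (by omega) hab
    · intro x hx
      obtain ⟨n, hn, hnx⟩ := hnbru x ((G.mem_neighborFinset _ _).mp hx)
      exact ⟨n, mem_filter.2 ⟨mem_range.2 (by omega),
        by rw [hnx]; exact (G.mem_neighborFinset _ _).mp hx⟩, hnx⟩
  have hBcard : B.card = G.degree v := by
    rw [← card_neighborFinset_eq_degree]
    apply Finset.card_bij (fun a _ => w.getVert a)
    · intro a ha
      rw [mem_neighborFinset]
      exact (mem_filter.mp ha).2
    · intro a ha b hb hab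
      have ha' := mem_range.mp (mem_filter.mp ha).1
      have hb' := mem_range.mp (mem_filter.mp hb).1
      exact Walk.getVert_inj' hw (by omega) (by omega) hab
    · intro x hx
      obtain ⟨n, hn, hnx⟩ := hnbrv x ((G.mem_neighborFinset _ _).mp hx)
      exact ⟨n, mem_filter.2 ⟨mem_range.2 (by omega),
        by rw [hnx]; exact (G.mem_neighborFinset _ _).mp hx⟩, hnx⟩
  have hAsub : A ⊆ Ico 1 k := by
    intro i hi
    obtain ⟨hir, hia⟩ := mem_filter.mp hi
    rw [mem_range] at hir
    have h0 : i ≠ 0 := by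
      rintro rfl
      rw [Walk.getVert_zero] at hia
      exact G.irrefl hia
    have hk' : i ≠ k := by
      rintro rfl
      rw [← hlen, Walk.getVert_length] at hia
      exact hadj hia
    exact mem_Ico.2 ⟨by omega, by omega⟩
  have hBsub : B ⊆ Ico 1 k := by
    intro i hi
    obtain ⟨hir, hia⟩ := mem_filter.mp hi
    rw [mem_range] at hir
    have h0 : i ≠ 0 := by
      rintro rfl
      rw [Walk.getVert_zero] at hia
      exact hadj hia.symm
    have hk' : i ≠ k := by
      rintro rfl
      rw [← hlen, Walk.getVert_length] at hia
      exact G.irrefl hia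
    exact mem_Ico.2 ⟨by omega, by omega⟩
  have hdisj : Disjoint A (B.image (· + 1)) := by
    rw [Finset.disjoint_left]
    intro i hiA hiB
    obtain ⟨j, hjB, rfl⟩ := Finset.mem_image.mp hiB
    have hik : j + 1 < k := (mem_Ico.mp (hAsub hiA)).2
    exact crossing_aux hw hlen hcyc hik (mem_filter.mp hiA).2 (mem_filter.mp hjB).2
  have hsum : G.degree u + G.degree v ≤ k := by
    have h1 : (A ∪ B.image (· + 1)).card = A.card + B.card := by
      rw [card_union_of_disjoint hdisj,
        card_image_of_injective _ (add_left_injective 1)]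
    have h2 : A ∪ B.image (· + 1) ⊆ Ico 1 (k + 1) := by
      apply union_subset (hAsub.trans (Ico_subset_Ico le_rfl (by omega)))
      intro i hi
      obtain ⟨j, hjB, rfl⟩ := Finset.mem_image.mp hi
      have := mem_Ico.mp (hBsub hjB)
      exact mem_Ico.2 ⟨by omega, by omega⟩
    have h3 := card_le_card h2
    rw [h1, Nat.card_Ico] at h3
    omega
  have hmin : min (G.degree u) (G.degree v) * 2 ≤ k := by
    have h1 := Nat.min_le_left (G.degree u) (G.degree v)
    have h2 := Nat.min_le_right (G.degree u) (G.degree v)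
    omega
  rw [le_div_iff₀ (by norm_num : (0:ℚ) < 2)]
  exact_mod_cast hmin
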